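/- Let I be a shifted stable monomial ideal of degree 2 in K[x_1,...,x_n] that is a-determined. Then the a-dual \hat{I}^{[a]} has linear quotients; moreover, in the associated ordering, each colon ideal is generated by at most 2 variables. -/

import Mathlib

open MvPolynomial Finsupp

/-- The monomial ideal of `K[x_1, x_2, …]` generated by the monomials with exponent
vectors in `S` (variables indexed by positive naturals). -/
noncomputable def monomialIdeal (K : Type*) [Field K] (S : Finset (ℕ →₀ ℕ)) :
    Ideal (MvPolynomial ℕ K) :=
  Ideal.span ((fun s => (monomial s (1 : K))) '' S)

/-- Exponent vectors of the generators `x^a / f` of the `a`-dual. -/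
noncomputable def dualGens (a : ℕ →₀ ℕ) (S : Finset (ℕ →₀ ℕ)) : Finset (ℕ →₀ ℕ) :=
  S.image (fun s => a - s)

/-- The shifted quasi-Ferrers diagram `{(i,j) : 1 ≤ i ≤ h, μ_i < j ≤ λ_i}` as a
finite set. -/
def quasiFerrersF (h : ℕ) (lam mu : ℕ → ℕ) : Finset (ℕ × ℕ) :=
  (Finset.Icc 1 h ×ˢ Finset.Icc 1 ((Finset.Icc 1 h).sup lam)).filter
    (fun p => mu p.1 < p.2 ∧ p.2 ≤ lam p.1)

/-- A quasi-Borel move of geometric length 1 between two points of `D`. -/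
def UnitStep (D : Finset (ℕ × ℕ)) (c c' : ℕ × ℕ) : Prop :=
  c ∈ D ∧ c' ∈ D ∧
    ((c.1 = c'.1 ∧ (c.2 + 1 = c'.2 ∨ c'.2 + 1 = c.2)) ∨
     (c.2 = c'.2 ∧ (c.1 + 1 = c'.1 ∨ c'.1 + 1 = c.1)))

/-- `D` is connected. -/
def DiagramConnected (D : Finset (ℕ × ℕ)) : Prop :=
  ∀ c ∈ D, ∀ c' ∈ D, Relation.ReflTransGen (UnitStep D) c c'

/-! ### Auxiliary lemmas -/

section ListAux
variable {α : Type*}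

lemma crossing_aux {r : α → α → Prop} {P : α → Prop} {x y : α}
    (h : Relation.ReflTransGen r x y) (hx : P x) :
    ¬ P y → ∃ u w, P u ∧ ¬ P w ∧ r u w := by
  induction h with
  | refl => exact fun hy => absurd hx hy
  | @tail b c _ hbc ih =>
    intro hy
    by_cases hb : P b
    · exact ⟨b, c, hb, hy, hbc⟩
    · exact ih hb

/-- A list in which every entry after the first is related to some earlier entry. -/
def GoodList [DecidableEq α] (r : α → α → Prop) (L : List α) : Prop :=
  ∀ (k : ℕ) (hk : k < L.length), 1 ≤ k →
    ∃ u ∈ (L.take k).toFinset, r u (L.get ⟨k, hk⟩)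

lemma extend_list [DecidableEq α] (r : α → α → Prop) (S : Finset α)
    (hconn : ∀ x ∈ S, ∀ y ∈ S,
      Relation.ReflTransGen (fun u w => u ∈ S ∧ w ∈ S ∧ r u w) x y) :
    ∀ (n : ℕ) (L : List α), S.card - L.length ≤ n → L ≠ [] → L.Nodup →
      L.toFinset ⊆ S → GoodList r L →
      ∃ L' : List α, L'.Nodup ∧ L'.toFinset = S ∧ GoodList r L' := by
  intro n
  induction n with
  | zero =>
    intro L hn _ hnd hsub hgood
    refine ⟨L, hnd, ?_, hgood⟩
    apply Finset.eq_of_subset_of_card_le hsub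
    rw [List.toFinset_card_of_nodup hnd]
    omega
  | succ n ih =>
    intro L hn hne hnd hsub hgood
    by_cases heq : L.toFinset = S
    · exact ⟨L, hnd, heq, hgood⟩
    · obtain ⟨y, hyS, hyT⟩ := Finset.exists_of_ssubset (hsub.ssubset_of_ne heq)
      have hx : L.head hne ∈ L.toFinset := List.mem_toFinset.mpr (List.head_mem hne)
      obtain ⟨u, w, hu, hw, _, hwS, hruw⟩ :=
        crossing_aux (hconn _ (hsub hx) y hyS) hx hyT
      have hwL : w ∉ L := fun hc => hw (List.mem_toFinset.mpr hc)
      have hnd' : (L ++ [w]).Nodup := by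
        rw [List.nodup_append]
        exact ⟨hnd, List.nodup_singleton w, fun x hx1 y hx2 hxy => hwL (by
          rw [List.mem_singleton] at hx2; rw [← hx2, ← hxy]; exact hx1)⟩
      have hsub' : (L ++ [w]).toFinset ⊆ S := by
        simp only [List.toFinset_append, List.toFinset_cons, List.toFinset_nil]
        intro x hx'
        rcases Finset.mem_union.mp hx' with h1 | h2
        · exact hsub h1
        · simp at h2; subst h2; exact hwS
      have hgood' : GoodList r (L ++ [w]) := by
        intro k hk hk1
        have hk2 : k < L.length + 1 := by
          simpa [List.length_append] using hk
        by_cases hkl : k < L.length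
        · have hget : (L ++ [w]).get ⟨k, hk⟩ = L.get ⟨k, hkl⟩ := by
            simp [List.get_eq_getElem, List.getElem_append_left hkl]
          have htake : (L ++ [w]).take k = L.take k :=
            List.take_append_of_le_length (le_of_lt hkl)
          rw [hget, htake]
          exact hgood k hkl hk1
        · have hkeq : k = L.length := by omega
          subst hkeq
          have htake : (L ++ [w]).take L.length = L := List.take_left
          have hget : (L ++ [w]).get ⟨L.length, hk⟩ = w := by
            simp [List.get_eq_getElem, List.getElem_concat_length]
          rw [htake, hget]
          exact ⟨u, hu, hruw⟩
      have h1 : L.toFinset.card < S.card :=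
        Finset.card_lt_card (hsub.ssubset_of_ne heq)
      rw [List.toFinset_card_of_nodup hnd] at h1
      refine ih (L ++ [w]) ?_ (by simp) hnd' hsub' hgood'
      rw [List.length_append, List.length_singleton]
      omega

end ListAux

section FinsuppAux

lemma toFinset_map_aux {α β : Type*} [DecidableEq α] [DecidableEq β] (f : α → β)
    (l : List α) : (l.map f).toFinset = l.toFinset.image f := by
  ext x; simp

lemma sub_sub_of_le' {a s t : ℕ →₀ ℕ} (hs : s ≤ a) (ht : t ≤ a) :
    (a - t) - (a - s) = s - t := by
  ext v
  have h1 := Finsupp.le_def.mp hs v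
  have h2 := Finsupp.le_def.mp ht v
  simp only [Finsupp.tsub_apply]
  omega

lemma helper_cancel {i j l : ℕ} (hjl : j ≠ l) :
    (single i 1 + single j 1 : ℕ →₀ ℕ) - (single i 1 + single l 1) = single j 1 := by
  ext v
  simp only [Finsupp.tsub_apply, Finsupp.add_apply, Finsupp.single_apply]
  split_ifs <;> omega

lemma mem_pair_of_apply_ne_zero {i j v : ℕ}
    (h : (single i 1 + single j 1 : ℕ →₀ ℕ) v ≠ 0) : i = v ∨ j = v := by
  by_contra hc
  push_neg at hc
  simp [Finsupp.add_apply, Finsupp.single_apply, hc.1, hc.2] at h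

lemma alpha {i j k l : ℕ}
    (hne : (single i 1 + single j 1 : ℕ →₀ ℕ) ≠ single k 1 + single l 1)
    {v : ℕ} (h1 : (single i 1 + single j 1 : ℕ →₀ ℕ) v ≠ 0)
    (h2 : (single k 1 + single l 1 : ℕ →₀ ℕ) v ≠ 0) :
    ∃ w, (single i 1 + single j 1 : ℕ →₀ ℕ) - (single k 1 + single l 1) = single w 1 ∧
      (single i 1 + single j 1 : ℕ →₀ ℕ) w ≠ 0 := by
  rcases mem_pair_of_apply_ne_zero h1 with hiv | hjv <;>
    rcases mem_pair_of_apply_ne_zero h2 with hkv | hlv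
  · have hik : k = i := by omega
    subst hik
    have hjl : j ≠ l := fun hc => hne (by subst hc; abel)
    exact ⟨j, helper_cancel hjl, by simp [Finsupp.add_apply, Finsupp.single_apply]⟩
  · have hil : l = i := by omega
    subst hil
    have hjk : j ≠ k := fun hc => hne (by subst hc; abel)
    rw [add_comm (single k 1)]
    exact ⟨j, helper_cancel hjk, by simp [Finsupp.add_apply, Finsupp.single_apply]⟩
  · have hjk : k = j := by omega
    subst hjk
    have hil : i ≠ l := fun hc => hne (by subst hc; abel)
    rw [add_comm (single i 1)]
    exact ⟨i, helper_cancel hil, by simp [Finsupp.add_apply, Finsupp.single_apply]⟩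
  · have hjl : l = j := by omega
    subst hjl
    have hik : i ≠ k := fun hc => hne (by subst hc; abel)
    rw [add_comm (single i 1), add_comm (single k 1)]
    exact ⟨i, helper_cancel hik, by simp [Finsupp.add_apply, Finsupp.single_apply]⟩

lemma alpha' {s t : ℕ →₀ ℕ}
    (hs : ∃ i j, s = single i 1 + single j 1)
    (ht : ∃ i j, t = single i 1 + single j 1)
    (hne : s ≠ t) (hsh : ∃ v, s v ≠ 0 ∧ t v ≠ 0) :
    ∃ w, s - t = single w 1 ∧ s w ≠ 0 := by
  obtain ⟨i, j, rfl⟩ := hs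
  obtain ⟨k, l, rfl⟩ := ht
  obtain ⟨v, h1, h2⟩ := hsh
  exact alpha hne h1 h2

lemma sub_eq_self_of_not_share {s t : ℕ →₀ ℕ}
    (h : ¬ ∃ v, s v ≠ 0 ∧ t v ≠ 0) : s - t = s := by
  push_neg at h
  ext v
  rcases eq_or_ne (s v) 0 with h0 | h0
  · simp [Finsupp.tsub_apply, h0]
  · have := h v h0
    simp [Finsupp.tsub_apply, this]

lemma support_pair_card {i j : ℕ} :
    (single i 1 + single j 1 : ℕ →₀ ℕ).support.card ≤ 2 := by
  have hsub : (single i 1 + single j 1 : ℕ →₀ ℕ).support ⊆ {i, j} := by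
    intro v hv
    rcases mem_pair_of_apply_ne_zero (Finsupp.mem_support_iff.mp hv) with h | h <;>
      simp [h.symm]
  calc (single i 1 + single j 1 : ℕ →₀ ℕ).support.card ≤ ({i, j} : Finset ℕ).card :=
        Finset.card_le_card hsub
    _ ≤ 2 := le_trans (Finset.card_insert_le _ _) (by simp)

end FinsuppAux

section AlgAux
variable {K : Type*} [Field K]

lemma mem_monomialIdeal {B : Finset (ℕ →₀ ℕ)} {f : MvPolynomial ℕ K} :
    f ∈ monomialIdeal K B ↔ ∀ m ∈ f.support, ∃ b ∈ B, b ≤ m := by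
  rw [monomialIdeal, mem_ideal_span_monomial_image]
  simp

lemma support_mul_monomial' (f : MvPolynomial ℕ K) (c : ℕ →₀ ℕ) :
    (f * monomial c 1).support = f.support.map (addRightEmbedding c) :=
  AddMonoidAlgebra.support_coeff_mul_single f _ (by simp) _

lemma colon_monomialIdeal (B : Finset (ℕ →₀ ℕ)) (c : ℕ →₀ ℕ) :
    Submodule.colon (monomialIdeal K B) (Ideal.span {monomial c (1 : K)}) =
      monomialIdeal K (B.image (· - c)) := by
  ext f
  rw [Ideal.mem_colon_span_singleton, mem_monomialIdeal, mem_monomialIdeal,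
    support_mul_monomial']
  simp only [Finset.mem_map, addRightEmbedding_apply, Finset.mem_image]
  constructor
  · intro H m hm
    obtain ⟨b, hb, hle⟩ := H (m + c) ⟨m, hm, rfl⟩
    exact ⟨b - c, ⟨b, hb, rfl⟩, tsub_le_iff_right.mpr hle⟩
  · rintro H m ⟨m', hm', rfl⟩
    obtain ⟨_, ⟨b, hb, rfl⟩, hle⟩ := H m' hm'
    exact ⟨b, hb, tsub_le_iff_right.mp hle⟩

lemma monomialIdeal_eq_span_X {E : Finset (ℕ →₀ ℕ)} {V : Finset ℕ}
    (h1 : ∀ v ∈ V, single v 1 ∈ E)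
    (h2 : ∀ e ∈ E, ∃ v ∈ V, e v ≠ 0) :
    monomialIdeal K E = Ideal.span ((fun j => (X j : MvPolynomial ℕ K)) '' V) := by
  apply le_antisymm
  · intro f hf
    rw [mem_monomialIdeal] at hf
    rw [show ((fun j => (X j : MvPolynomial ℕ K)) '' ↑V) = X '' ↑V from rfl,
      mem_ideal_span_X_image]
    intro m hm
    obtain ⟨e, he, hle⟩ := hf m hm
    obtain ⟨v, hv, hne⟩ := h2 e he
    exact ⟨v, hv, fun h0 => hne (Nat.le_zero.mp (h0 ▸ (Finsupp.le_def.mp hle v)))⟩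
  · rw [Ideal.span_le]
    rintro _ ⟨v, hv, rfl⟩
    rw [SetLike.mem_coe, mem_monomialIdeal]
    intro m hm
    rw [MvPolynomial.support_X, Finset.mem_singleton] at hm
    subst hm
    exact ⟨single v 1, h1 v hv, le_refl _⟩

end AlgAux

/-- If `I` is a shifted stable ideal of degree 2 (the specialization
`(x_i x_j : (i,j) ∈ D_{λ−μ})` of a connected shifted quasi-Ferrers diagram), and `I` is
`a`-determined, then the `a`-dual of `I` has linear quotients; moreover each colon
ideal in the associated ordering is generated by at most two variables. -/
theorem dual_shiftedStable_hasLinearQuotients (K : Type*) [Field K]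
    (h : ℕ) (lam mu : ℕ → ℕ)
    (hpart : ∀ i, 1 ≤ i → i ≤ h → i - 1 ≤ mu i ∧ mu i < lam i)
    (hconn : DiagramConnected (quasiFerrersF h lam mu))
    (S : Finset (ℕ →₀ ℕ))
    (hS : S = (quasiFerrersF h lam mu).image fun p => single p.1 1 + single p.2 1)
    (a : ℕ →₀ ℕ) (hdet : ∀ s ∈ S, s ≤ a) :
    ∃ L : List (ℕ →₀ ℕ), L.Nodup ∧ L.toFinset = dualGens a S ∧
      ∀ (k : ℕ) (hk : k < L.length), 1 ≤ k →
        ∃ V : Finset ℕ, V.card ≤ 2 ∧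
          Submodule.colon (monomialIdeal K (L.take k).toFinset)
              (Ideal.span {monomial (L.get ⟨k, hk⟩) (1 : K)}) =
            Ideal.span ((fun j => (X j : MvPolynomial ℕ K)) '' V) := by
  classical
  set r : (ℕ →₀ ℕ) → (ℕ →₀ ℕ) → Prop := fun u w => ∃ v, u v ≠ 0 ∧ w v ≠ 0 with hrdef
  have hmemS : ∀ s ∈ S, ∃ p ∈ quasiFerrersF h lam mu, single p.1 1 + single p.2 1 = s := by
    intro s hs
    rw [hS] at hs
    exact Finset.mem_image.mp hs
  have hpair : ∀ s ∈ S, ∃ i j, s = single i 1 + single j 1 := by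
    intro s hs
    obtain ⟨p, _, hp⟩ := hmemS s hs
    exact ⟨p.1, p.2, hp.symm⟩
  have happly1 : ∀ i j : ℕ, (single i 1 + single j 1 : ℕ →₀ ℕ) i ≠ 0 := by
    intro i j
    simp only [Finsupp.add_apply, Finsupp.single_apply, if_pos rfl]
    split_ifs <;> omega
  have happly2 : ∀ i j : ℕ, (single i 1 + single j 1 : ℕ →₀ ℕ) j ≠ 0 := by
    intro i j
    simp only [Finsupp.add_apply, Finsupp.single_apply, if_pos rfl]
    split_ifs <;> omega
  have hconnS : ∀ x ∈ S, ∀ y ∈ S,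
      Relation.ReflTransGen (fun u w => u ∈ S ∧ w ∈ S ∧ r u w) x y := by
    intro x hx y hy
    obtain ⟨p, hp, rfl⟩ := hmemS x hx
    obtain ⟨q, hq, rfl⟩ := hmemS y hy
    refine Relation.ReflTransGen.lift (fun c : ℕ × ℕ => single c.1 1 + single c.2 1) ?_ _ _
      (hconn p hp q hq)
    rintro c c' ⟨hc, hc', hor⟩
    refine ⟨by rw [hS]; exact Finset.mem_image_of_mem _ hc,
      by rw [hS]; exact Finset.mem_image_of_mem _ hc', ?_⟩
    rcases hor with ⟨he, _⟩ | ⟨he, _⟩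
    · refine ⟨c.1, happly1 _ _, ?_⟩
      show (single c'.1 1 + single c'.2 1 : ℕ →₀ ℕ) c.1 ≠ 0
      rw [he]; exact happly1 _ _
    · refine ⟨c.2, happly2 _ _, ?_⟩
      show (single c'.1 1 + single c'.2 1 : ℕ →₀ ℕ) c.2 ≠ 0
      rw [he]; exact happly2 _ _
  rcases S.eq_empty_or_nonempty with hSe | ⟨x0, hx0⟩
  · refine ⟨[], List.nodup_nil, by simp [dualGens, hSe], ?_⟩
    intro k hk
    simp at hk
  · obtain ⟨L₀, hnd₀, hfin₀, hgood₀⟩ :=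
      extend_list r S hconnS S.card [x0] (by simpa using Nat.sub_le S.card 1)
        (by simp) (List.nodup_singleton x0)
        (by intro z hz; simp at hz; subst hz; exact hx0)
        (by intro k hk hk1; simp at hk; omega)
    have hmemL : ∀ z ∈ L₀, z ∈ S := fun z hz => hfin₀ ▸ List.mem_toFinset.mpr hz
    refine ⟨L₀.map (fun s => a - s), ?_, ?_, ?_⟩
    · refine List.Nodup.map_on ?_ hnd₀
      intro x hx y hy hxy
      have hxa := hdet x (hmemL x hx)
      have hya := hdet y (hmemL y hy)
      have h2 := congrArg (fun z => a - z) hxy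
      simpa [tsub_tsub_cancel_of_le hxa, tsub_tsub_cancel_of_le hya] using h2
    · rw [toFinset_map_aux, hfin₀]; rfl
    · intro k hk hk1
      have hk' : k < L₀.length := by simpa using hk
      set s := L₀.get ⟨k, hk'⟩ with hsdef
      have hsS : s ∈ S := hmemL s (L₀.get_mem _)
      have hsa : s ≤ a := hdet s hsS
      have hget : (L₀.map (fun s => a - s)).get ⟨k, hk⟩ = a - s := by
        simp [hsdef, List.get_eq_getElem]
      have htake : ((L₀.map (fun s => a - s)).take k).toFinset
          = (L₀.take k).toFinset.image (fun t => a - t) := by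
        rw [← List.map_take, toFinset_map_aux]
      have hsdrop : s ∈ L₀.drop k := by
        have h0 : 0 < (L₀.drop k).length := by
          rw [List.length_drop]; omega
        have hh : (L₀.drop k).get ⟨0, h0⟩ = s := by
          simp [hsdef, List.get_eq_getElem, List.getElem_drop]
        rw [← hh]
        exact List.get_mem _ _
      have hsnot : s ∉ L₀.take k :=
        fun hc => (List.disjoint_take_drop hnd₀ (le_refl k)) hc hsdrop
      have hTneq : ∀ t ∈ (L₀.take k).toFinset, t ≠ s :=
        fun t ht hc => hsnot (hc ▸ List.mem_toFinset.mp ht)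
      have hTS : ∀ t ∈ (L₀.take k).toFinset, t ∈ S :=
        fun t ht => hmemL t (List.mem_of_mem_take (List.mem_toFinset.mp ht))
      rw [hget, htake, colon_monomialIdeal, Finset.image_image]
      have himg : (L₀.take k).toFinset.image ((fun x => x - (a - s)) ∘ (fun t => a - t))
          = (L₀.take k).toFinset.image (fun t => s - t) := by
        apply Finset.image_congr
        intro t ht
        exact sub_sub_of_le' hsa (hdet t (hTS t ht))
      rw [himg]
      set E := (L₀.take k).toFinset.image (fun t => s - t) with hE
      set V := s.support.filter (fun v => single v 1 ∈ E) with hV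
      obtain ⟨u, hu, huv⟩ := hgood₀ k hk' hk1
      obtain ⟨w0, hw0e, hw0s⟩ := alpha' (hpair s hsS) (hpair u (hTS u hu))
        (Ne.symm (hTneq u hu)) (by obtain ⟨v, h1, h2⟩ := huv; exact ⟨v, h2, h1⟩)
      have hw0V : w0 ∈ V := Finset.mem_filter.mpr
        ⟨Finsupp.mem_support_iff.mpr hw0s,
          by rw [← hw0e]; exact Finset.mem_image_of_mem _ hu⟩
      refine ⟨V, ?_, monomialIdeal_eq_span_X ?_ ?_⟩
      · refine le_trans (Finset.card_filter_le _ _) ?_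
        obtain ⟨i, j, hij⟩ := hpair s hsS
        rw [hij]
        exact support_pair_card
      · intro v hv
        exact (Finset.mem_filter.mp hv).2
      · intro e he
        obtain ⟨t, ht, rfl⟩ := Finset.mem_image.mp he
        by_cases hsh : ∃ v, s v ≠ 0 ∧ t v ≠ 0
        · obtain ⟨w, hwe, hws⟩ := alpha' (hpair s hsS) (hpair t (hTS t ht))
            (Ne.symm (hTneq t ht)) hsh
          refine ⟨w, Finset.mem_filter.mpr ⟨Finsupp.mem_support_iff.mpr hws,
            by rw [← hwe]; exact Finset.mem_image_of_mem _ ht⟩, ?_⟩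
          rw [hwe]
          simp [Finsupp.single_apply]
        · rw [sub_eq_self_of_not_share hsh]
          exact ⟨w0, hw0V, Finsupp.mem_support_iff.mp (Finset.mem_filter.mp hw0V).1⟩
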